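/- (Künneth formula / parameters of the hypergraph product.) Let δ ∈ M_{n1 × n0}(F2) and set k0 := n0 − rank(δ) = nullity(δ) and k1 := n1 − rank(δ) = nullity(δᵀ). Define δ̃_{−1} := the block-column matrix [1_{n0} ⊗ δᵀ ; δ ⊗ 1_{n1}] : F2^{n0·n1} → F2^{n0² + n1²}, and δ̃_0 := the block-row matrix [δ ⊗ 1_{n0} , 1_{n1} ⊗ δᵀ] : F2^{n0² + n1²} → F2^{n1·n0}. Then δ̃_0 · δ̃_{−1} = 0 and the Betti numbers of the resulting length-2 complex are: nullity(δ̃_{−1}) = k0·k1; nullity(δ̃_0) − rank(δ̃_{−1}) = k0² + k1²; and n0·n1 − rank(δ̃_0) = k0·k1 (equivalently nullity(δ̃_0ᵀ) = k0·k1). -/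

import Mathlib

open Matrix
open scoped Kronecker

abbrev F2 := ZMod 2

/-- Hamming weight of a vector over `F2`. -/
def vwt {ι : Type*} [Fintype ι] (v : ι → F2) : ℕ :=
  (Finset.univ.filter fun i => v i ≠ 0).card

/-- Hamming weight of a matrix over `F2` (number of nonzero entries). -/
def mwt {ι κ : Type*} [Fintype ι] [Fintype κ] (M : Matrix ι κ F2) : ℕ :=
  (Finset.univ.filter fun p : ι × κ => M p.1 p.2 ≠ 0).card

/-- Nullity of a matrix over `F2`: dimension of the kernel of the induced linear map. -/
noncomputable def nullity {ι κ : Type*} [Fintype ι] [Fintype κ] (M : Matrix ι κ F2) : ℕ :=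
  Module.finrank F2 (LinearMap.ker M.mulVecLin)

section aux
variable {l m n a b : Type*} [Fintype l] [Fintype m] [Fintype n] [Fintype a] [Fintype b]

omit [Fintype l] in
lemma kron_one_mulVec [DecidableEq n] (A : Matrix l m F2) (v : m × n → F2) (p : l × n) :
    (A ⊗ₖ (1 : Matrix n n F2)).mulVec v p = A.mulVec (fun k => v (k, p.2)) p.1 := by
  obtain ⟨i, j⟩ := p
  simp [Matrix.mulVec, dotProduct, Fintype.sum_prod_type, Matrix.one_apply,
    mul_ite, ite_mul, Finset.sum_ite_eq', mul_comm]

omit [Fintype l] in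
lemma one_kron_mulVec [DecidableEq m] (B : Matrix l n F2) (v : m × n → F2) (p : m × l) :
    ((1 : Matrix m m F2) ⊗ₖ B).mulVec v p = B.mulVec (fun k => v (p.1, k)) p.2 := by
  obtain ⟨i, j⟩ := p
  simp [Matrix.mulVec, dotProduct, Fintype.sum_prod_type, Matrix.one_apply,
    mul_ite, ite_mul, Finset.sum_ite_eq, Finset.sum_ite_eq']

/-- For any matrix `A`, there are matrices `M` (columns a basis of `ker A`) and a left
inverse `L` of `M` such that `M * L` is a projection onto `ker A`. -/
lemma exists_kernel_basis_matrix [DecidableEq m] (A : Matrix a m F2) :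
    ∃ (M : Matrix m (Fin (nullity A)) F2) (L : Matrix (Fin (nullity A)) m F2),
      A * M = 0 ∧ L * M = 1 ∧ ∀ x ∈ LinearMap.ker A.mulVecLin, M.mulVec (L.mulVec x) = x := by
  classical
  set K := LinearMap.ker A.mulVecLin with hK
  let bK : Module.Basis (Fin (nullity A)) F2 K := Module.finBasis F2 K
  let f : (Fin (nullity A) → F2) →ₗ[F2] (m → F2) := K.subtype ∘ₗ bK.equivFun.symm.toLinearMap
  obtain ⟨K', hK'⟩ := Submodule.exists_isCompl K
  let g : (m → F2) →ₗ[F2] (Fin (nullity A) → F2) :=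
    bK.equivFun.toLinearMap ∘ₗ (K.projectionOnto K' hK')
  have hf_mem : ∀ c, f c ∈ K := fun c => (bK.equivFun.symm c).2
  have hgf : g ∘ₗ f = LinearMap.id := by
    refine LinearMap.ext fun c => ?_
    simp only [f, g, LinearMap.comp_apply, Submodule.subtype_apply, LinearMap.id_apply,
      Submodule.projectionOnto_apply_left]
    exact bK.equivFun.apply_symm_apply c
  refine ⟨LinearMap.toMatrix' f, LinearMap.toMatrix' g, ?_, ?_, ?_⟩
  · apply Matrix.toLin'.injective
    rw [Matrix.toLin'_mul, Matrix.toLin'_toMatrix', map_zero]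
    refine LinearMap.ext fun c => ?_
    have hm := hf_mem c
    rw [hK, LinearMap.mem_ker] at hm
    simp only [LinearMap.comp_apply, Matrix.toLin'_apply, LinearMap.zero_apply,
      ← Matrix.mulVecLin_apply, hm]
  · rw [← LinearMap.toMatrix'_comp, hgf, LinearMap.toMatrix'_id]
  · intro x hx
    have h1 : LinearMap.toMatrix' g *ᵥ x = g x := by
      rw [← Matrix.toLin'_apply, Matrix.toLin'_toMatrix']
    have h2 : ∀ c, (LinearMap.toMatrix' f) *ᵥ c = f c := fun c => by
      rw [← Matrix.toLin'_apply, Matrix.toLin'_toMatrix']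
    rw [h1, h2]
    simp only [f, g, LinearMap.comp_apply, Submodule.subtype_apply]
    rw [show x = ((⟨x, hx⟩ : K) : m → F2) from rfl, Submodule.projectionOnto_apply_left]
    simp only [Module.Basis.equivFun_symm_apply]
    simpa using congrArg Subtype.val (bK.sum_repr ⟨x, hx⟩)

lemma inf_ker_finrank [DecidableEq m] [DecidableEq n]
    (A : Matrix a m F2) (B : Matrix b n F2) :
    Module.finrank F2 ↥(LinearMap.ker (A ⊗ₖ (1 : Matrix n n F2)).mulVecLin ⊓
      LinearMap.ker ((1 : Matrix m m F2) ⊗ₖ B).mulVecLin) = nullity A * nullity B := by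
  classical
  obtain ⟨MA, LA, hAMA, hLMA, hfixA⟩ := exists_kernel_basis_matrix A
  obtain ⟨MB, LB, hBMB, hLMB, hfixB⟩ := exists_kernel_basis_matrix B
  have hrange : LinearMap.range (MA ⊗ₖ MB).mulVecLin =
      (LinearMap.ker (A ⊗ₖ (1 : Matrix n n F2)).mulVecLin ⊓
        LinearMap.ker ((1 : Matrix m m F2) ⊗ₖ B).mulVecLin) := by
    apply le_antisymm
    · rintro _ ⟨c, rfl⟩
      refine Submodule.mem_inf.2 ⟨?_, ?_⟩
      · rw [LinearMap.mem_ker, Matrix.mulVecLin_apply, Matrix.mulVecLin_apply,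
          Matrix.mulVec_mulVec, ← Matrix.mul_kronecker_mul, hAMA, Matrix.zero_kronecker,
          Matrix.zero_mulVec]
      · rw [LinearMap.mem_ker, Matrix.mulVecLin_apply, Matrix.mulVecLin_apply,
          Matrix.mulVec_mulVec, ← Matrix.mul_kronecker_mul, hBMB, Matrix.kronecker_zero,
          Matrix.zero_mulVec]
    · intro v hv
      obtain ⟨hv1, hv2⟩ := Submodule.mem_inf.1 hv
      rw [LinearMap.mem_ker, Matrix.mulVecLin_apply] at hv1 hv2
      have hrow : ∀ i, (fun k => v (i, k)) ∈ LinearMap.ker B.mulVecLin := by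
        intro i
        rw [LinearMap.mem_ker, Matrix.mulVecLin_apply]
        funext j
        have h := congrFun hv2 (i, j)
        rw [one_kron_mulVec] at h
        simpa using h
      have hcol : ∀ j, (fun k => v (k, j)) ∈ LinearMap.ker A.mulVecLin := by
        intro j
        rw [LinearMap.mem_ker, Matrix.mulVecLin_apply]
        funext i
        have h := congrFun hv1 (i, j)
        rw [kron_one_mulVec] at h
        simpa using h
      refine ⟨(LA ⊗ₖ LB) *ᵥ v, ?_⟩
      rw [Matrix.mulVecLin_apply, Matrix.mulVec_mulVec, ← Matrix.mul_kronecker_mul]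
      have hsplit : (MA * LA) ⊗ₖ (MB * LB) =
          ((MA * LA) ⊗ₖ (1 : Matrix n n F2)) * ((1 : Matrix m m F2) ⊗ₖ (MB * LB)) := by
        rw [← Matrix.mul_kronecker_mul, Matrix.mul_one, Matrix.one_mul]
      rw [hsplit, ← Matrix.mulVec_mulVec]
      have step1 : ((1 : Matrix m m F2) ⊗ₖ (MB * LB)) *ᵥ v = v := by
        funext p
        rw [one_kron_mulVec, ← Matrix.mulVec_mulVec, hfixB _ (hrow p.1)]
      rw [step1]
      funext p
      rw [kron_one_mulVec, ← Matrix.mulVec_mulVec, hfixA _ (hcol p.2)]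
  have hinj : Function.Injective (MA ⊗ₖ MB).mulVecLin := by
    have hleft : ∀ c, (LA ⊗ₖ LB) *ᵥ ((MA ⊗ₖ MB).mulVecLin c) = c := by
      intro c
      rw [Matrix.mulVecLin_apply, Matrix.mulVec_mulVec, ← Matrix.mul_kronecker_mul,
        hLMA, hLMB, Matrix.one_kronecker_one, Matrix.one_mulVec]
    intro c c' h
    rw [← hleft c, ← hleft c', h]
  rw [← hrange, LinearMap.finrank_range_of_inj hinj,
    Module.finrank_fintype_fun_eq_card, Fintype.card_prod, Fintype.card_fin, Fintype.card_fin]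

lemma ker_fromRows {c : Type*} [Fintype c]
    (A : Matrix a c F2) (B : Matrix b c F2) :
    LinearMap.ker (Matrix.fromRows A B).mulVecLin =
      LinearMap.ker A.mulVecLin ⊓ LinearMap.ker B.mulVecLin := by
  ext v
  simp only [LinearMap.mem_ker, Submodule.mem_inf, Matrix.mulVecLin_apply,
    Matrix.fromRows_mulVec]
  constructor
  · intro h
    exact ⟨funext fun i => congrFun h (Sum.inl i), funext fun i => congrFun h (Sum.inr i)⟩
  · rintro ⟨h1, h2⟩
    funext i
    cases i with
    | inl i => exact congrFun h1 i
    | inr i => exact congrFun h2 i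

lemma rank_add_nullity {ι κ : Type*} [Fintype ι] [Fintype κ] (M : Matrix ι κ F2) :
    M.rank + nullity M = Fintype.card κ := by
  rw [Matrix.rank, nullity, LinearMap.finrank_range_add_finrank_ker,
    Module.finrank_fintype_fun_eq_card]

end aux

/-- Künneth formula / parameters of the hypergraph product: the hypergraph
product of `δ` with itself is a length-2 chain complex with Betti numbers `k0·k1`,
`k0² + k1²`, `k0·k1`. -/
theorem hypergraph_product_parameters
    (n0 n1 : ℕ) (δ : Matrix (Fin n1) (Fin n0) F2)
    (k0 k1 : ℕ) (hk0 : k0 = nullity δ) (hk1 : k1 = nullity δᵀ)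
    (dm1 : Matrix ((Fin n0 × Fin n0) ⊕ (Fin n1 × Fin n1)) (Fin n0 × Fin n1) F2)
    (hdm1 : dm1 = Matrix.fromRows
      ((1 : Matrix (Fin n0) (Fin n0) F2) ⊗ₖ δᵀ)
      (δ ⊗ₖ (1 : Matrix (Fin n1) (Fin n1) F2)))
    (d0 : Matrix (Fin n1 × Fin n0) ((Fin n0 × Fin n0) ⊕ (Fin n1 × Fin n1)) F2)
    (hd0 : d0 = Matrix.fromCols
      (δ ⊗ₖ (1 : Matrix (Fin n0) (Fin n0) F2))
      ((1 : Matrix (Fin n1) (Fin n1) F2) ⊗ₖ δᵀ)) :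
    d0 * dm1 = 0 ∧
    nullity dm1 = k0 * k1 ∧
    (nullity d0 : ℤ) - (dm1.rank : ℤ) = (k0 : ℤ)^2 + (k1 : ℤ)^2 ∧
    ((n0 * n1 : ℕ) : ℤ) - (d0.rank : ℤ) = (k0 : ℤ) * k1 ∧
    nullity d0ᵀ = k0 * k1 := by
  subst hk0 hk1
  -- abbreviations
  set K0 := nullity δ with hK0
  set K1 := nullity δᵀ with hK1
  -- (1) the composition is zero
  have hcomp : d0 * dm1 = 0 := by
    rw [hd0, hdm1, Matrix.fromCols_mul_fromRows, ← Matrix.mul_kronecker_mul,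
      ← Matrix.mul_kronecker_mul, Matrix.mul_one, Matrix.one_mul, Matrix.mul_one,
      Matrix.one_mul]
    ext i j
    have h2 : ∀ x : F2, x + x = 0 := by decide
    rw [Matrix.add_apply, Matrix.zero_apply, h2]
  -- (2) nullity of dm1
  have hdm1null : nullity dm1 = K0 * K1 := by
    rw [hdm1, nullity, ker_fromRows, inf_comm]
    exact inf_ker_finrank δ δᵀ
  -- (3) nullity of d0ᵀ
  have hd0t : d0ᵀ = Matrix.fromRows
      (δᵀ ⊗ₖ (1 : Matrix (Fin n0) (Fin n0) F2))
      ((1 : Matrix (Fin n1) (Fin n1) F2) ⊗ₖ δ) := by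
    rw [hd0, Matrix.transpose_fromCols, ← Matrix.kroneckerMap_transpose,
      ← Matrix.kroneckerMap_transpose, Matrix.transpose_one, Matrix.transpose_one,
      Matrix.transpose_transpose]
  have hd0tnull : nullity d0ᵀ = K1 * K0 := by
    rw [hd0t, nullity, ker_fromRows]
    exact inf_ker_finrank δᵀ δ
  -- rank/nullity bookkeeping
  have f1 := rank_add_nullity δ
  have f2 := rank_add_nullity δᵀ
  have f3 : δᵀ.rank = δ.rank := Matrix.rank_transpose δ
  have f4 := rank_add_nullity dm1
  have f5 := rank_add_nullity d0
  have f6 := rank_add_nullity d0ᵀ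
  have f7 : d0ᵀ.rank = d0.rank := Matrix.rank_transpose d0
  simp only [Fintype.card_prod, Fintype.card_sum, Fintype.card_fin] at f1 f2 f4 f5 f6
  rw [hdm1null] at f4
  rw [hd0tnull, f7] at f6
  refine ⟨hcomp, hdm1null, ?_, ?_, by rw [hd0tnull, mul_comm]⟩
  · -- (nullity d0 : ℤ) - dm1.rank = K0^2 + K1^2
    have hn0 : (n0 : ℤ) = (δ.rank : ℤ) + K0 := by exact_mod_cast f1.symm
    have hn1 : (n1 : ℤ) = (δ.rank : ℤ) + K1 := by rw [← f3]; exact_mod_cast f2.symm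
    have e4 : (dm1.rank : ℤ) + (K0 : ℤ) * K1 = (n0 : ℤ) * n1 := by exact_mod_cast f4
    have e5 : (d0.rank : ℤ) + (nullity d0 : ℤ) = (n0 : ℤ) * n0 + (n1 : ℤ) * n1 := by
      exact_mod_cast f5
    have e6 : (d0.rank : ℤ) + (K1 : ℤ) * K0 = (n1 : ℤ) * n0 := by exact_mod_cast f6
    have hnd0 : (nullity d0 : ℤ) =
        (n0 : ℤ) * n0 + (n1 : ℤ) * n1 - ((n0 : ℤ) * n1 - (K1 : ℤ) * K0) := by linarith
    have hrdm1 : (dm1.rank : ℤ) = (n0 : ℤ) * n1 - (K0 : ℤ) * K1 := by linarith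
    rw [hnd0, hrdm1, hn0, hn1]
    ring
  · -- (n0*n1 : ℤ) - d0.rank = K0*K1
    have e6 : (d0.rank : ℤ) + (K1 : ℤ) * K0 = (n1 : ℤ) * n0 := by exact_mod_cast f6
    push_cast
    linarith
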